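/- Let M(x,y) = 4xy/(√x+√y)² and 0 < g < 1. Among all nonnegative sequences (c_n²) with ∑ c_n² = 1 and ∑ n c_n² = N, the geometric sequence c_n² = N^n/(N+1)^{n+1} maximizes G = ∑_{n=0}^∞ (n+1) M(c_n², g c_{n+1}²). -/

import Mathlib

/-- The mean function M(x,y) = 4xy/(√x+√y)². -/
noncomputable def meanM (x y : ℝ) : ℝ := 4 * x * y / (Real.sqrt x + Real.sqrt y) ^ 2

private lemma key_poly (s u v : ℝ) (hs : 0 ≤ s) (hu : 0 ≤ u) (hv : 0 ≤ v) :
    (1 + s) ^ 3 * (u ^ 2 * v ^ 2) ≤ (s ^ 3 * u ^ 2 + v ^ 2) * (u + v) ^ 2 := by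
  nlinarith [mul_nonneg (sq_nonneg (v - s * u))
    (by positivity : (0:ℝ) ≤ v ^ 2 + 2 * (1 + s) * u * v + s * u ^ 2)]

private lemma meanM_le (s x y : ℝ) (hs : 0 < s) (hx : 0 ≤ x) (hy : 0 ≤ y) :
    meanM x y ≤ (4 * s ^ 3 * x + 4 * y) / (1 + s) ^ 3 := by
  rcases eq_or_lt_of_le hx with hx0 | hx0
  · rw [meanM, ← hx0]
    simp only [mul_zero, zero_mul, zero_div, mul_one]
    positivity
  rcases eq_or_lt_of_le hy with hy0 | hy0
  · rw [meanM, ← hy0]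
    simp only [mul_zero, zero_div]
    positivity
  have hu : 0 < Real.sqrt x := Real.sqrt_pos.2 hx0
  have hv : 0 < Real.sqrt y := Real.sqrt_pos.2 hy0
  have hux : Real.sqrt x ^ 2 = x := Real.sq_sqrt hx
  have hvy : Real.sqrt y ^ 2 = y := Real.sq_sqrt hy
  rw [meanM, div_le_div_iff₀ (by positivity) (by positivity)]
  have key := key_poly s (Real.sqrt x) (Real.sqrt y) hs.le hu.le hv.le
  rw [hux, hvy] at key
  nlinarith [key]

private lemma meanM_prop (t x : ℝ) (ht : 0 ≤ t) (hx : 0 < x) :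
    meanM x (t * x) = (4 * t / (1 + Real.sqrt t) ^ 2) * x := by
  have hu : 0 < Real.sqrt x := Real.sqrt_pos.2 hx
  have hux : Real.sqrt x ^ 2 = x := Real.sq_sqrt hx.le
  have hst : (0:ℝ) ≤ 1 + Real.sqrt t := by positivity
  rw [meanM, Real.sqrt_mul ht]
  have h1 : Real.sqrt x + Real.sqrt t * Real.sqrt x = Real.sqrt x * (1 + Real.sqrt t) := by ring
  rw [h1, mul_pow, hux]
  have h2 : (0:ℝ) < 1 + Real.sqrt t := by positivity
  field_simp

/-- The geometric (TMSV) distribution maximizes G = ∑ (n+1) M(p_n, g p_{n+1})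
    among probability distributions on ℕ with mean N. -/
theorem tmsv_maximizes (g N : ℝ) (hg0 : 0 < g) (hg1 : g < 1) (hN : 0 < N)
    (p : ℕ → ℝ) (hp : ∀ n, 0 ≤ p n)
    (hps : Summable p) (hpnorm : (∑' n, p n) = 1)
    (hpe : Summable fun n : ℕ => (n : ℝ) * p n)
    (hpmean : (∑' n : ℕ, (n : ℝ) * p n) = N)
    (hG : Summable fun n : ℕ => ((n : ℝ) + 1) * meanM (p n) (g * p (n + 1))) :
    (∑' n : ℕ, ((n : ℝ) + 1) * meanM (p n) (g * p (n + 1)))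
      ≤ ∑' n : ℕ, ((n : ℝ) + 1) *
          meanM (N ^ n / (N + 1) ^ (n + 1)) (g * (N ^ (n + 1) / (N + 1) ^ (n + 2))) := by
  have hN1 : (0:ℝ) < N + 1 := by linarith
  set t : ℝ := g * N / (N + 1) with ht_def
  have ht0 : 0 < t := by positivity
  set s : ℝ := Real.sqrt t with hs_def
  have hs0 : 0 < s := Real.sqrt_pos.2 ht0
  have hst : s ^ 2 = t := Real.sq_sqrt ht0.le
  have hkey : s ^ 2 * (N + 1) = g * N := by
    rw [hst, ht_def]; field_simp
  -- the two auxiliary sums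
  have hf1 : Summable (fun n : ℕ => ((n:ℝ) + 1) * p n) := by
    have := hpe.add hps
    simpa [add_mul] using this
  have hf2 : Summable (fun n : ℕ => ((n:ℝ) + 1) * p (n + 1)) := by
    have h := hpe.comp_injective (add_left_injective 1)
    have he : (fun n : ℕ => ((n:ℝ) + 1) * p (n + 1))
        = ((fun n : ℕ => (n:ℝ) * p n) ∘ fun x => x + 1) := by
      funext n; simp only [Function.comp]; push_cast; ring
    rw [he]; exact h
  have htf1 : (∑' n : ℕ, ((n:ℝ) + 1) * p n) = N + 1 := by
    have : (fun n : ℕ => ((n:ℝ) + 1) * p n) = fun n : ℕ => (n:ℝ) * p n + p n := by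
      funext n; ring
    rw [this, Summable.tsum_add hpe hps, hpmean, hpnorm]
  have htf2 : (∑' n : ℕ, ((n:ℝ) + 1) * p (n + 1)) = N := by
    have h0 := Summable.tsum_eq_zero_add hpe
    simp only [Nat.cast_zero, zero_mul, zero_add] at h0
    rw [hpmean] at h0
    rw [h0]
    exact tsum_congr fun n => by push_cast; ring
  -- bound the left-hand side
  have hterm : ∀ n : ℕ, ((n:ℝ) + 1) * meanM (p n) (g * p (n + 1)) ≤
      (4 * s ^ 3 / (1 + s) ^ 3) * (((n:ℝ) + 1) * p n)
        + (4 * g / (1 + s) ^ 3) * (((n:ℝ) + 1) * p (n + 1)) := by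
    intro n
    have h := meanM_le s (p n) (g * p (n + 1)) hs0 (hp n)
      (mul_nonneg hg0.le (hp (n + 1)))
    have hn : (0:ℝ) ≤ (n:ℝ) + 1 := by positivity
    calc ((n:ℝ) + 1) * meanM (p n) (g * p (n + 1))
        ≤ ((n:ℝ) + 1) * ((4 * s ^ 3 * p n + 4 * (g * p (n + 1))) / (1 + s) ^ 3) :=
          mul_le_mul_of_nonneg_left h hn
      _ = (4 * s ^ 3 / (1 + s) ^ 3) * (((n:ℝ) + 1) * p n)
            + (4 * g / (1 + s) ^ 3) * (((n:ℝ) + 1) * p (n + 1)) := by ring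
  have hbs : Summable (fun n : ℕ =>
      (4 * s ^ 3 / (1 + s) ^ 3) * (((n:ℝ) + 1) * p n)
        + (4 * g / (1 + s) ^ 3) * (((n:ℝ) + 1) * p (n + 1))) :=
    (hf1.mul_left _).add (hf2.mul_left _)
  have hLHS : (∑' n : ℕ, ((n:ℝ) + 1) * meanM (p n) (g * p (n + 1)))
      ≤ (4 * s ^ 3 / (1 + s) ^ 3) * (N + 1) + (4 * g / (1 + s) ^ 3) * N := by
    calc (∑' n : ℕ, ((n:ℝ) + 1) * meanM (p n) (g * p (n + 1)))
        ≤ ∑' n : ℕ, ((4 * s ^ 3 / (1 + s) ^ 3) * (((n:ℝ) + 1) * p n)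
            + (4 * g / (1 + s) ^ 3) * (((n:ℝ) + 1) * p (n + 1))) :=
          Summable.tsum_le_tsum hterm hG hbs
      _ = (4 * s ^ 3 / (1 + s) ^ 3) * (N + 1) + (4 * g / (1 + s) ^ 3) * N := by
          rw [Summable.tsum_add (hf1.mul_left _) (hf2.mul_left _), tsum_mul_left, tsum_mul_left,
            htf1, htf2]
  -- compute the right-hand side
  set q : ℕ → ℝ := fun n => N ^ n / (N + 1) ^ (n + 1) with hq_def
  have hq_pos : ∀ n, 0 < q n := fun n => by positivity
  have hgq : ∀ n : ℕ, g * (N ^ (n + 1) / (N + 1) ^ (n + 2)) = t * q n := by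
    intro n
    rw [ht_def, hq_def]
    simp only [pow_succ]
    field_simp
  have hRterm : ∀ n : ℕ, ((n:ℝ) + 1) * meanM (q n) (g * (N ^ (n+1) / (N+1) ^ (n+2)))
      = (4 * t / (1 + s) ^ 2) * (((n:ℝ) + 1) * q n) := by
    intro n
    rw [hgq n, meanM_prop t (q n) ht0.le (hq_pos n), ← hs_def]
    ring
  set r : ℝ := N / (N + 1) with hr_def
  have hr0 : 0 ≤ r := by positivity
  have hr1 : r < 1 := by rw [hr_def, div_lt_one hN1]; linarith
  have hrn : ‖r‖ < 1 := by rw [Real.norm_eq_abs, abs_of_nonneg hr0]; exact hr1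
  have hgeo : HasSum (fun n : ℕ => r ^ n) ((1 - r)⁻¹) :=
    (hasSum_geometric_of_lt_one hr0 hr1)
  have hngeo : HasSum (fun n : ℕ => (n:ℝ) * r ^ n) (r / (1 - r) ^ 2) :=
    hasSum_coe_mul_geometric_of_norm_lt_one hrn
  have hqsum : HasSum (fun n : ℕ => ((n:ℝ) + 1) * q n)
      ((r / (1 - r) ^ 2 + (1 - r)⁻¹) * (N + 1)⁻¹) := by
    have hq_eq : (fun n : ℕ => ((n:ℝ) + 1) * q n)
        = fun n : ℕ => ((n:ℝ) * r ^ n + r ^ n) * (N + 1)⁻¹ := by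
      funext n
      simp only [hq_def, hr_def, div_pow, pow_succ]
      field_simp
    rw [hq_eq]
    exact (hngeo.add hgeo).mul_right _
  have h1r : 1 - r = (N + 1)⁻¹ := by
    rw [hr_def]; field_simp; ring
  have hqval : (r / (1 - r) ^ 2 + (1 - r)⁻¹) * (N + 1)⁻¹ = N + 1 := by
    rw [h1r, hr_def]
    field_simp
  have hRHS : (∑' n : ℕ, ((n:ℝ) + 1) *
      meanM (N ^ n / (N + 1) ^ (n + 1)) (g * (N ^ (n + 1) / (N + 1) ^ (n + 2))))
      = (4 * t / (1 + s) ^ 2) * (N + 1) := by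
    have : (fun n : ℕ => ((n:ℝ) + 1) *
        meanM (N ^ n / (N + 1) ^ (n + 1)) (g * (N ^ (n + 1) / (N + 1) ^ (n + 2))))
        = fun n : ℕ => (4 * t / (1 + s) ^ 2) * (((n:ℝ) + 1) * q n) := by
      funext n; exact hRterm n
    rw [this, tsum_mul_left, hqsum.tsum_eq, hqval]
  rw [hRHS]
  -- final algebraic identity: the bound equals the geometric value
  have hfin : (4 * s ^ 3 / (1 + s) ^ 3) * (N + 1) + (4 * g / (1 + s) ^ 3) * N
      = (4 * t / (1 + s) ^ 2) * (N + 1) := by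
    rw [← hst]
    have h1s : (0:ℝ) < 1 + s := by positivity
    field_simp
    nlinarith [hkey, sq_nonneg s, h1s]
  linarith [hLHS, hfin.ge, hfin.le]
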